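/- arXiv:2008.05296 — 2 statements merged into one kernel-verified Lean document; each statement's English description precedes it below -/
import Mathlib

section
/- Let Γ₀ be a subgroup of a group Γ and let λ: Γ → ℝ^r be a function satisfying λ(γⁿ) = n·λ(γ) for all γ ∈ Γ and n ≥ 1. Assume the subgroup of (ℝ^r,+) generated by λ(Γ₀) is dense in ℝ^r, and that λ(γ) ≠ 0 whenever λ(γ) ∈ S₀ for a given finite set S₀ ⊂ λ(Γ₀) \ {0}. Then the subgroup generated by λ(Γ₀) \ S₀ is still dense in ℝ^r. -/
/-- If λ(γⁿ) = n·λ(γ), the subgroup generated by λ(Γ₀) is dense in ℝ^r,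
and S₀ is a finite subset of λ(Γ₀) \ {0}, then the subgroup generated by
λ(Γ₀) \ S₀ is still dense in ℝ^r. -/
theorem stmt4 {Γ : Type*} [Group Γ] (Γ₀ : Subgroup Γ) (r : ℕ)
    (lam : Γ → (Fin r → ℝ))
    (hhom : ∀ γ : Γ, ∀ n : ℕ, 1 ≤ n → lam (γ ^ n) = (n : ℝ) • lam γ)
    (hdense : Dense (AddSubgroup.closure (lam '' (Γ₀ : Set Γ)) : Set (Fin r → ℝ)))
    (S₀ : Finset (Fin r → ℝ))
    (hS₀ : (S₀ : Set (Fin r → ℝ)) ⊆ (lam '' (Γ₀ : Set Γ)) \ {0}) :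
    Dense (AddSubgroup.closure ((lam '' (Γ₀ : Set Γ)) \ (S₀ : Set (Fin r → ℝ))) :
      Set (Fin r → ℝ)) := by
  set A : Set (Fin r → ℝ) := lam '' (Γ₀ : Set Γ)
  have key : A ⊆ (AddSubgroup.closure (A \ (S₀ : Set (Fin r → ℝ))) : Set (Fin r → ℝ)) := by
    intro x hx
    by_cases hxS : x ∈ (S₀ : Set (Fin r → ℝ))
    · -- x ∈ S₀, so x ≠ 0
      have hx0 : x ≠ 0 := (hS₀ hxS).2
      obtain ⟨γ, hγ, hγx⟩ := hx
      -- finitely many n with (n:ℝ)•x ∈ S₀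
      have hinj : Function.Injective (fun n : ℕ => (n : ℝ) • x) := by
        intro a b hab
        have h : ((a : ℝ) - b) • x = 0 := by simp only [sub_smul]; rw [show ((a:ℝ)•x = (b:ℝ)•x) from hab, sub_self]
        rcases smul_eq_zero.mp h with h | h
        · exact_mod_cast sub_eq_zero.mp h
        · exact absurd h hx0
      have hfin : {n : ℕ | (n : ℝ) • x ∈ (S₀ : Set (Fin r → ℝ))}.Finite :=
        Set.Finite.preimage hinj.injOn S₀.finite_toSet
      obtain ⟨N, hN⟩ := hfin.bddAbove
      set n := N + 1
      have hn1 : 1 ≤ n := Nat.le_add_left 1 N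
      have hnot : ∀ m : ℕ, N < m → (m : ℝ) • x ∉ (S₀ : Set (Fin r → ℝ)) := by
        intro m hm hmem
        exact absurd (hN hmem) (not_le.mpr hm)
      have h1 : (n : ℝ) • x ∈ A \ (S₀ : Set (Fin r → ℝ)) := by
        refine ⟨⟨γ ^ n, Γ₀.pow_mem hγ n, ?_⟩, hnot n (Nat.lt_succ_self N)⟩
        rw [hhom γ n hn1, hγx]
      have h2 : ((n + 1 : ℕ) : ℝ) • x ∈ A \ (S₀ : Set (Fin r → ℝ)) := by
        refine ⟨⟨γ ^ (n + 1), Γ₀.pow_mem hγ (n + 1), ?_⟩, hnot (n + 1) (by omega)⟩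
        rw [hhom γ (n + 1) (by omega), hγx]
      have hmem1 := AddSubgroup.subset_closure h1
      have hmem2 := AddSubgroup.subset_closure h2
      have : x = ((n + 1 : ℕ) : ℝ) • x - (n : ℝ) • x := by
        push_cast
        rw [← sub_smul]
        simp
      rw [this]
      exact sub_mem hmem2 hmem1
    · exact AddSubgroup.subset_closure ⟨hx, hxS⟩
  have hle : (AddSubgroup.closure A : Set (Fin r → ℝ)) ⊆
      (AddSubgroup.closure (A \ (S₀ : Set (Fin r → ℝ))) : Set (Fin r → ℝ)) :=
    AddSubgroup.closure_le _ |>.mpr key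
  exact hdense.mono hle
end

section
/- Let Γ be a δ-hyperbolic group with finite symmetric generating set S and word metric d_w. There exist R₀ > 1 and N₀ > 0 such that for all γ₁, γ₂ ∈ Γ with |γ₁|, |γ₂| ≥ N₀ and |γ₁γ₂| = |γ₁| + |γ₂|, and for all R ≥ R₀, the intersection O_R(γ₁γ₂, e) ∩ O_R(γ₁γ₂, γ₁) ∩ O_R(γ₁, e) of shadows in the Gromov boundary ∂Γ is nonempty. -/
open Filter

variable {Γ : Type*} [Group Γ]

/-- Word length with respect to a generating set S. -/
noncomputable def wordLength (S : Set Γ) (γ : Γ) : ℕ :=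
  sInf {n | ∃ l : List Γ, (∀ s ∈ l, s ∈ S) ∧ l.length = n ∧ l.prod = γ}

/-- The left-invariant word metric. -/
noncomputable def wdist (S : Set Γ) (a b : Γ) : ℕ := wordLength S (a⁻¹ * b)

/-- A discrete geodesic ray in (Γ, d_w). -/
def IsGeodesicRay (S : Set Γ) (ρ : ℕ → Γ) : Prop :=
  ∀ m n : ℕ, wdist S (ρ m) (ρ n) = max m n - min m n

/-- Two rays define the same boundary point iff they stay at bounded distance. -/
def RayEquiv (S : Set Γ) (ρ σ : ℕ → Γ) : Prop :=
  ∃ C : ℕ, ∀ n, wdist S (ρ n) (σ n) ≤ C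

/-- Gromov product based at the identity, with respect to the word metric. -/
noncomputable def gp (S : Set Γ) (a b : Γ) : ℝ :=
  ((wdist S 1 a : ℝ) + (wdist S 1 b : ℝ) - (wdist S a b : ℝ)) / 2

section Aux
variable (S : Set Γ)

lemma wl_le {l : List Γ} (hl : ∀ s ∈ l, s ∈ S) : wordLength S l.prod ≤ l.length :=
  Nat.sInf_le ⟨l, hl, rfl, rfl⟩

lemma wl_spec (hgen : ∀ γ : Γ, ∃ l : List Γ, (∀ s ∈ l, s ∈ S) ∧ l.prod = γ) (γ : Γ) :
    ∃ l : List Γ, (∀ s ∈ l, s ∈ S) ∧ l.length = wordLength S γ ∧ l.prod = γ := by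
  have hne : {n | ∃ l : List Γ, (∀ s ∈ l, s ∈ S) ∧ l.length = n ∧ l.prod = γ}.Nonempty := by
    obtain ⟨l, hl, hp⟩ := hgen γ
    exact ⟨l.length, l, hl, rfl, hp⟩
  exact Nat.sInf_mem hne

lemma wl_one : wordLength S (1 : Γ) = 0 :=
  Nat.le_zero.mp (wl_le S (l := []) (by simp))

lemma wl_mul_le (hgen : ∀ γ : Γ, ∃ l : List Γ, (∀ s ∈ l, s ∈ S) ∧ l.prod = γ) (a b : Γ) :
    wordLength S (a * b) ≤ wordLength S a + wordLength S b := by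
  obtain ⟨l, hl, hlen, hp⟩ := wl_spec S hgen a
  obtain ⟨m, hm, hmlen, hmp⟩ := wl_spec S hgen b
  have : wordLength S ((l ++ m).prod) ≤ (l ++ m).length := by
    apply wl_le
    intro s hs
    rcases List.mem_append.mp hs with h | h
    · exact hl s h
    · exact hm s h
  simpa [hp, hmp, hlen, hmlen] using this

lemma wl_inv_le (hsymm : ∀ s ∈ S, s⁻¹ ∈ S)
    (hgen : ∀ γ : Γ, ∃ l : List Γ, (∀ s ∈ l, s ∈ S) ∧ l.prod = γ) (γ : Γ) :
    wordLength S γ⁻¹ ≤ wordLength S γ := by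
  obtain ⟨l, hl, hlen, hp⟩ := wl_spec S hgen γ
  have hmem : ∀ s ∈ (l.map fun x => x⁻¹).reverse, s ∈ S := by
    intro s hs
    simp only [List.mem_reverse, List.mem_map] at hs
    obtain ⟨x, hx, rfl⟩ := hs
    exact hsymm x (hl x hx)
  have := wl_le S hmem
  rw [← List.prod_inv_reverse, hp] at this
  simpa [hlen] using this

lemma wl_inv (hsymm : ∀ s ∈ S, s⁻¹ ∈ S)
    (hgen : ∀ γ : Γ, ∃ l : List Γ, (∀ s ∈ l, s ∈ S) ∧ l.prod = γ) (γ : Γ) :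
    wordLength S γ⁻¹ = wordLength S γ :=
  le_antisymm (wl_inv_le S hsymm hgen γ)
    (by simpa using wl_inv_le S hsymm hgen γ⁻¹)

lemma wdist_left (g a b : Γ) : wdist S (g * a) (g * b) = wdist S a b := by
  unfold wdist; group

lemma wdist_comm (hsymm : ∀ s ∈ S, s⁻¹ ∈ S)
    (hgen : ∀ γ : Γ, ∃ l : List Γ, (∀ s ∈ l, s ∈ S) ∧ l.prod = γ) (a b : Γ) :
    wdist S a b = wdist S b a := by
  unfold wdist
  rw [show b⁻¹ * a = (a⁻¹ * b)⁻¹ by group, wl_inv S hsymm hgen]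

lemma wdist_triangle (hgen : ∀ γ : Γ, ∃ l : List Γ, (∀ s ∈ l, s ∈ S) ∧ l.prod = γ)
    (a b c : Γ) : wdist S a c ≤ wdist S a b + wdist S b c := by
  unfold wdist
  calc wordLength S (a⁻¹ * c) = wordLength S ((a⁻¹ * b) * (b⁻¹ * c)) := by group
  _ ≤ _ := wl_mul_le S hgen _ _

lemma wdist_self (a : Γ) : wdist S a a = 0 := by
  unfold wdist; simp [wl_one]

lemma wdist_one_left (γ : Γ) : wdist S 1 γ = wordLength S γ := by
  unfold wdist; simp

lemma wdist_one_right (hsymm : ∀ s ∈ S, s⁻¹ ∈ S)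
    (hgen : ∀ γ : Γ, ∃ l : List Γ, (∀ s ∈ l, s ∈ S) ∧ l.prod = γ) (γ : Γ) :
    wdist S γ 1 = wordLength S γ := by
  rw [wdist_comm S hsymm hgen, wdist_one_left]

/-- Gromov product at an arbitrary basepoint x. -/
noncomputable def gpAt (S : Set Γ) (x a b : Γ) : ℝ :=
  ((wdist S x a : ℝ) + (wdist S x b : ℝ) - (wdist S a b : ℝ)) / 2

lemma gp_eq_gpAt_one (a b : Γ) : gp S a b = gpAt S 1 a b := rfl

lemma gpAt_eq_gp (x a b : Γ) : gpAt S x a b = gp S (x⁻¹ * a) (x⁻¹ * b) := by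
  unfold gpAt gp
  have h1 : wdist S 1 (x⁻¹ * a) = wdist S x a := by unfold wdist; group
  have h2 : wdist S 1 (x⁻¹ * b) = wdist S x b := by unfold wdist; group
  have h3 : wdist S (x⁻¹ * a) (x⁻¹ * b) = wdist S a b := wdist_left S x⁻¹ a b
  rw [h1, h2, h3]

lemma gpAt_nonneg (hsymm : ∀ s ∈ S, s⁻¹ ∈ S)
    (hgen : ∀ γ : Γ, ∃ l : List Γ, (∀ s ∈ l, s ∈ S) ∧ l.prod = γ) (x a b : Γ) :
    0 ≤ gpAt S x a b := by
  unfold gpAt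
  have t := wdist_triangle S hgen a x b
  rw [wdist_comm S hsymm hgen a x] at t
  have : (wdist S a b : ℝ) ≤ (wdist S x a : ℝ) + (wdist S x b : ℝ) := by exact_mod_cast t
  linarith

lemma gpAt_le_left (hgen : ∀ γ : Γ, ∃ l : List Γ, (∀ s ∈ l, s ∈ S) ∧ l.prod = γ)
    (x a b : Γ) : gpAt S x a b ≤ wdist S x a := by
  unfold gpAt
  have t := wdist_triangle S hgen x a b
  have : (wdist S x b : ℝ) ≤ (wdist S x a : ℝ) + (wdist S a b : ℝ) := by exact_mod_cast t
  linarith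

lemma gpAt_comm (hsymm : ∀ s ∈ S, s⁻¹ ∈ S)
    (hgen : ∀ γ : Γ, ∃ l : List Γ, (∀ s ∈ l, s ∈ S) ∧ l.prod = γ) (x a b : Γ) :
    gpAt S x a b = gpAt S x b a := by
  unfold gpAt
  rw [wdist_comm S hsymm hgen a b]
  ring

lemma gp_comm (hsymm : ∀ s ∈ S, s⁻¹ ∈ S)
    (hgen : ∀ γ : Γ, ∃ l : List Γ, (∀ s ∈ l, s ∈ S) ∧ l.prod = γ) (a b : Γ) :
    gp S a b = gp S b a := by
  rw [gp_eq_gpAt_one, gp_eq_gpAt_one, gpAt_comm S hsymm hgen]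

/-- Discrete geodesic path from a to b, extended constantly at the endpoint. -/
lemma path_exists (hgen : ∀ γ : Γ, ∃ l : List Γ, (∀ s ∈ l, s ∈ S) ∧ l.prod = γ) (a b : Γ) :
    ∃ σ : ℕ → Γ, σ 0 = a ∧ (∀ k, wdist S a (σ k) ≤ k) ∧
      (∀ k, wdist S a b ≤ k → σ k = b) ∧
      (∀ i j, i ≤ j → j ≤ wdist S a b → wdist S (σ i) (σ j) = j - i) := by
  obtain ⟨l, hl, hlen, hp⟩ := wl_spec S hgen (a⁻¹ * b)
  have hLab : l.length = wdist S a b := hlen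
  set σ : ℕ → Γ := fun k => a * (l.take k).prod with hσ
  have key : ∀ i j : ℕ, i ≤ j → wdist S (σ i) (σ j) ≤ j - i := by
    intro i j hij
    simp only [hσ]
    rw [wdist_left]
    have hsplit : l.take j = l.take i ++ ((l.drop i).take (j - i)) := by
      rw [← List.take_add]
      congr 1
      omega
    have heq : (l.take i).prod⁻¹ * (l.take j).prod = ((l.drop i).take (j-i)).prod := by
      rw [hsplit, List.prod_append]; group
    unfold wdist
    rw [heq]
    calc wordLength S ((l.drop i).take (j-i)).prod ≤ ((l.drop i).take (j-i)).length :=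
          wl_le S (fun s hs => hl s (List.mem_of_mem_drop (List.mem_of_mem_take hs)))
      _ ≤ j - i := by simp
  have hσ0 : σ 0 = a := by simp [hσ]
  have hend : ∀ k, wdist S a b ≤ k → σ k = b := by
    intro k hk
    simp only [hσ]
    rw [List.take_of_length_le (by omega), hp]
    group
  refine ⟨σ, hσ0, ?_, hend, ?_⟩
  · intro k
    have := key 0 k (Nat.zero_le k)
    rw [hσ0] at this
    simpa using this
  · intro i j hij hj
    have h1 := key i j hij
    have h2 : wdist S a (σ i) ≤ i := by
      have := key 0 i (Nat.zero_le i); rw [hσ0] at this; simpa using this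
    have h3 : wdist S (σ j) b ≤ wdist S a b - j := by
      have := key j (wdist S a b) hj
      rw [hend (wdist S a b) (le_refl _)] at this
      omega
    have h4 : wdist S a b ≤ wdist S a (σ i) + wdist S (σ i) (σ j) + wdist S (σ j) b := by
      calc wdist S a b ≤ wdist S a (σ i) + wdist S (σ i) b := wdist_triangle S hgen _ _ _
        _ ≤ _ := by
            have := wdist_triangle S hgen (σ i) (σ j) b
            omega
    omega

lemma hyp_at (δ : ℝ) (hhyp : ∀ a b c : Γ, min (gp S a c) (gp S c b) - δ ≤ gp S a b)
    (x a b c : Γ) : min (gpAt S x a c) (gpAt S x c b) - δ ≤ gpAt S x a b := by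
  rw [gpAt_eq_gp S x a c, gpAt_eq_gp S x c b, gpAt_eq_gp S x a b]
  exact hhyp _ _ _

/-- A geodesic from a to b passes within (a·b)_x + 2δ + 2 of x. -/
lemma near_geo (hsymm : ∀ s ∈ S, s⁻¹ ∈ S)
    (hgen : ∀ γ : Γ, ∃ l : List Γ, (∀ s ∈ l, s ∈ S) ∧ l.prod = γ)
    (δ : ℝ)
    (hhyp : ∀ a b c : Γ, min (gp S a c) (gp S c b) - δ ≤ gp S a b)
    (x a b : Γ) (σ : ℕ → Γ) (hσ0 : σ 0 = a)
    (hend : ∀ k, wdist S a b ≤ k → σ k = b)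
    (hgeo : ∀ i j, i ≤ j → j ≤ wdist S a b → wdist S (σ i) (σ j) = j - i) :
    ∃ k ≤ wdist S a b, (wdist S x (σ k) : ℝ) ≤ gpAt S x a b + 2*δ + 2 := by
  classical
  set L := wdist S a b with hL
  have hda : ∀ t, t ≤ L → (wdist S a (σ t) : ℝ) = t := by
    intro t ht
    have := hgeo 0 t (Nat.zero_le t) ht
    rw [hσ0] at this
    rw [this]; simp
  have hdb : ∀ t, t ≤ L → (wdist S (σ t) b : ℝ) = (L : ℝ) - t := by
    intro t ht
    have := hgeo t L ht (le_refl _)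
    rw [hend L (le_refl _)] at this
    rw [this]
    have : ((L - t : ℕ) : ℝ) = (L : ℝ) - t := by
      push_cast [Nat.cast_sub ht]; ring
    rw [this]
  set P : ℕ → ℝ := fun t => gpAt S x a (σ t) with hP
  set Q : ℕ → ℝ := fun t => gpAt S x (σ t) b with hQ
  have hsum : ∀ t, t ≤ L → P t + Q t = gpAt S x a b + (wdist S x (σ t) : ℝ) := by
    intro t ht
    simp only [hP, hQ]
    unfold gpAt
    rw [hda t ht, hdb t ht]
    ring
  set f : ℕ → ℝ := fun t => P t - Q t with hf
  have hstep : ∀ t, t + 1 ≤ L → f t - 2 ≤ f (t+1) := by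
    intro t ht
    have h1 : wdist S (σ t) (σ (t+1)) = 1 := by
      have := hgeo t (t+1) (by omega) ht
      simpa using this
    have h2 : (wdist S x (σ t) : ℝ) - 1 ≤ (wdist S x (σ (t+1)) : ℝ) := by
      have := wdist_triangle S hgen x (σ (t+1)) (σ t)
      rw [wdist_comm S hsymm hgen (σ (t+1)) (σ t), h1] at this
      have : (wdist S x (σ t) : ℝ) ≤ (wdist S x (σ (t+1)) : ℝ) + 1 := by exact_mod_cast this
      linarith
    have h3 : (wdist S x (σ (t+1)) : ℝ) ≤ (wdist S x (σ t) : ℝ) + 1 := by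
      have := wdist_triangle S hgen x (σ t) (σ (t+1))
      rw [h1] at this
      exact_mod_cast this
    simp only [hf, hP, hQ]
    unfold gpAt
    have ha1 := hda t (by omega)
    have ha2 := hda (t+1) ht
    have hb1 := hdb t (by omega)
    have hb2 := hdb (t+1) ht
    rw [ha1, ha2, hb1, hb2]
    push_cast
    linarith
  have hf0 : 0 ≤ f 0 := by
    simp only [hf, hP, hQ, hσ0]
    have h1 : gpAt S x a a = (wdist S x a : ℝ) := by
      unfold gpAt
      have : wdist S a a = 0 := wdist_self S a
      rw [this]
      push_cast
      ring
    rw [h1]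
    have := gpAt_le_left S hgen x a b
    linarith
  have hfL : f L ≤ 0 := by
    simp only [hf, hP, hQ, hend L (le_refl _)]
    have h1 : gpAt S x b b = (wdist S x b : ℝ) := by
      unfold gpAt
      rw [wdist_self S b]
      push_cast
      ring
    rw [h1]
    have h2 := gpAt_le_left S hgen x b a
    rw [gpAt_comm S hsymm hgen x b a] at h2
    linarith
  have hex : ∃ t, t ≤ L ∧ f t ≤ 0 := ⟨L, le_refl _, hfL⟩
  have ht₀L : Nat.find hex ≤ L := (Nat.find_spec hex).1
  have ht₀f : f (Nat.find hex) ≤ 0 := (Nat.find_spec hex).2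
  set t₀ := Nat.find hex with ht₀
  have habs : -2 ≤ f t₀ := by
    rcases Nat.eq_zero_or_pos t₀ with h0 | h0
    · rw [h0] at ht₀f ⊢; linarith
    · have hprev : ¬ (t₀ - 1 ≤ L ∧ f (t₀ - 1) ≤ 0) := Nat.find_min hex (by omega)
      have hprevL : t₀ - 1 ≤ L := by omega
      have : 0 < f (t₀ - 1) := by
        by_contra h
        exact hprev ⟨hprevL, by linarith⟩
      have hs := hstep (t₀ - 1) (by omega)
      have : t₀ - 1 + 1 = t₀ := by omega
      rw [this] at hs
      linarith
  refine ⟨t₀, ht₀L, ?_⟩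
  have hmin := hyp_at S δ hhyp x a b (σ t₀)
  have hsum₀ := hsum t₀ ht₀L
  have hPQ : P t₀ ≤ Q t₀ + 2 ∧ Q t₀ ≤ P t₀ + 2 := by
    constructor <;> simp only [hf] at ht₀f habs <;> linarith
  rcases le_total (P t₀) (Q t₀) with h | h
  · have hm : min (P t₀) (Q t₀) = P t₀ := min_eq_left h
    rw [hm] at hmin
    have := hPQ.2
    linarith
  · have hm : min (P t₀) (Q t₀) = Q t₀ := min_eq_right h
    rw [hm] at hmin
    have := hPQ.1
    linarith

lemma ball_finite (hfin : S.Finite)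
    (hgen : ∀ γ : Γ, ∃ l : List Γ, (∀ s ∈ l, s ∈ S) ∧ l.prod = γ) (k : ℕ) :
    {γ : Γ | wordLength S γ ≤ k}.Finite := by
  have : Finite ↥S := hfin.to_subtype
  have h1 : {l : List ↥S | l.length ≤ k}.Finite := List.finite_length_le ↥S k
  have h2 : ((fun l : List ↥S => (l.map Subtype.val).prod) '' {l | l.length ≤ k}).Finite :=
    h1.image _
  apply h2.subset
  intro γ hγ
  simp only [Set.mem_setOf_eq] at hγ
  obtain ⟨l, hl, hlen, hp⟩ := wl_spec S hgen γ
  refine ⟨l.attach.map (fun x => (⟨x.1, hl x.1 x.2⟩ : ↥S)), ?_, ?_⟩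
  · simp only [Set.mem_setOf_eq, List.length_map, List.length_attach]
    omega
  · have hmaps : List.map Subtype.val (l.attach.map fun x => (⟨x.1, hl x.1 x.2⟩ : ↥S)) = l := by
      rw [List.map_map]
      exact List.attach_map_subtype_val l
    show (List.map Subtype.val (l.attach.map fun x => (⟨x.1, hl x.1 x.2⟩ : ↥S))).prod = γ
    rw [hmaps, hp]

lemma wball_finite (hfin : S.Finite)
    (hgen : ∀ γ : Γ, ∃ l : List Γ, (∀ s ∈ l, s ∈ S) ∧ l.prod = γ) (g : Γ) (k : ℕ) :
    {γ : Γ | wdist S g γ ≤ k}.Finite := by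
  have h := (ball_finite S hfin hgen k).image (fun x => g * x)
  apply h.subset
  intro γ hγ
  exact ⟨g⁻¹ * γ, hγ, by group⟩

/-- Ultrafilter (König) limit of a family of paths emanating from a common basepoint. -/
lemma ultralimit (hfin : S.Finite)
    (hgen : ∀ γ : Γ, ∃ l : List Γ, (∀ s ∈ l, s ∈ S) ∧ l.prod = γ)
    (U : Ultrafilter ℕ) (g : Γ) (f : ℕ → ℕ → Γ)
    (hball : ∀ m k, wdist S g (f m k) ≤ k) :
    ∃ ρ : ℕ → Γ, ∀ k, {m | ∀ j ≤ k, f m j = ρ j} ∈ U := by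
  have hpt : ∀ k : ℕ, ∃ x : Γ, {m | f m k = x} ∈ U := by
    intro k
    have hb : {γ : Γ | wdist S g γ ≤ k} ∈ U.map (fun m => f m k) := by
      rw [Ultrafilter.mem_map]
      have : (fun m => f m k) ⁻¹' {γ : Γ | wdist S g γ ≤ k} = Set.univ := by
        ext m; simp [hball m k]
      rw [this]
      exact Filter.univ_mem
    obtain ⟨x, _, hx⟩ := Ultrafilter.eq_pure_of_finite_mem (wball_finite S hfin hgen g k) hb
    refine ⟨x, ?_⟩
    have hmem : {γ : Γ | γ = x} ∈ U.map (fun m => f m k) := by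
      rw [hx]
      simp [Ultrafilter.mem_pure]
    rw [Ultrafilter.mem_map] at hmem
    exact hmem
  choose ρ hρ using hpt
  refine ⟨ρ, fun k => ?_⟩
  have hin : (⋂ j ∈ Set.Iic k, {m | f m j = ρ j}) ∈ U :=
    (Filter.biInter_mem (Set.finite_Iic k)).2 (fun j _ => hρ j)
  apply Filter.mem_of_superset hin
  intro m hm
  simp only [Set.mem_iInter, Set.mem_setOf_eq, Set.mem_Iic] at hm
  exact fun j hj => hm j hj

lemma hyper_tail (M : ℕ) : {m : ℕ | M ≤ m} ∈ Filter.hyperfilter ℕ := by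
  apply Filter.mem_hyperfilter_of_finite_compl
  have hs : {m : ℕ | M ≤ m}ᶜ ⊆ Set.Iio M := by
    intro m hm
    simp only [Set.mem_compl_iff, Set.mem_setOf_eq, not_le] at hm
    exact hm
  exact (Set.finite_Iio M).subset hs

lemma wl_surj (hgen : ∀ γ : Γ, ∃ l : List Γ, (∀ s ∈ l, s ∈ S) ∧ l.prod = γ)
    (hub : ∀ B : ℕ, ∃ γ : Γ, B < wordLength S γ) (n : ℕ) :
    ∃ γ : Γ, wordLength S γ = n := by
  obtain ⟨γ₀, hγ₀⟩ := hub n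
  obtain ⟨l, hl, hlen, hp⟩ := wl_spec S hgen γ₀
  refine ⟨(l.take n).prod, le_antisymm ?_ ?_⟩
  · calc wordLength S (l.take n).prod ≤ (l.take n).length :=
        wl_le S (fun s hs => hl s (List.mem_of_mem_take hs))
      _ ≤ n := by simp
  · have hsplit : l = l.take n ++ l.drop n := (List.take_append_drop n l).symm
    have hγ : γ₀ = (l.take n).prod * (l.drop n).prod := by
      rw [← List.prod_append, ← hsplit, hp]
    have h1 : wordLength S γ₀ ≤ wordLength S (l.take n).prod + wordLength S (l.drop n).prod := by
      rw [hγ]; exact wl_mul_le S hgen _ _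
    have h2 : wordLength S (l.drop n).prod ≤ l.length - n := by
      calc wordLength S (l.drop n).prod ≤ (l.drop n).length :=
          wl_le S (fun s hs => hl s (List.mem_of_mem_drop hs))
        _ = l.length - n := by simp
    omega

/-- Opposite points: two points on the n-sphere at distance exactly 2n
(obtained by recentering a geodesic of length 2n at its midpoint). -/
lemma opp_points (hsymm : ∀ s ∈ S, s⁻¹ ∈ S)
    (hgen : ∀ γ : Γ, ∃ l : List Γ, (∀ s ∈ l, s ∈ S) ∧ l.prod = γ)
    (hub : ∀ B : ℕ, ∃ γ : Γ, B < wordLength S γ) (n : ℕ) :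
    ∃ u v : Γ, wordLength S u = n ∧ wordLength S v = n ∧ wdist S u v = 2*n := by
  obtain ⟨w, hw⟩ := wl_surj S hgen hub (2*n)
  obtain ⟨l, hl, hlen, hp⟩ := wl_spec S hgen w
  set m := (l.take n).prod with hm
  set d := (l.drop n).prod with hd
  have hw_eq : w = m * d := by
    rw [hm, hd, ← List.prod_append, List.take_append_drop, hp]
  have hmle : wordLength S m ≤ n := by
    calc wordLength S m ≤ (l.take n).length := wl_le S (fun s hs => hl s (List.mem_of_mem_take hs))
      _ ≤ n := by simp
  have hlen2n : l.length = 2*n := by rw [hlen, hw]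
  have hdle : wordLength S d ≤ n := by
    calc wordLength S d ≤ (l.drop n).length := wl_le S (fun s hs => hl s (List.mem_of_mem_drop hs))
      _ ≤ n := by simp; omega
  have hsplitle : 2*n ≤ wordLength S m + wordLength S d := by
    rw [← hw, hw_eq]
    exact wl_mul_le S hgen m d
  have hmn : wordLength S m = n := by omega
  have hdn : wordLength S d = n := by omega
  refine ⟨m⁻¹, m⁻¹ * w, ?_, ?_, ?_⟩
  · rw [wl_inv S hsymm hgen]; exact hmn
  · rw [show m⁻¹ * w = d by rw [hw_eq]; group]
    exact hdn
  · unfold wdist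
    rw [show (m⁻¹)⁻¹ * (m⁻¹ * w) = w by group, hw]

/-- A ray is geodesic as soon as it is geodesic for ordered pairs of times. -/
lemma ray_of_ordered (hsymm : ∀ s ∈ S, s⁻¹ ∈ S)
    (hgen : ∀ γ : Γ, ∃ l : List Γ, (∀ s ∈ l, s ∈ S) ∧ l.prod = γ)
    (ρ : ℕ → Γ) (h : ∀ i j, i ≤ j → wdist S (ρ i) (ρ j) = j - i) :
    IsGeodesicRay S ρ := by
  intro i j
  rcases le_total i j with hij | hij
  · rw [h i j hij]
    omega
  · rw [wdist_comm S hsymm hgen, h j i hij]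
    omega

end Aux

/-- In a δ-hyperbolic group, there exist R₀ > 1 and N₀ > 0 such that for
γ₁, γ₂ with |γ₁|,|γ₂| ≥ N₀ and |γ₁γ₂| = |γ₁| + |γ₂|, and any R ≥ R₀, the shadows
O_R(γ₁γ₂, e), O_R(γ₁γ₂, γ₁) and O_R(γ₁, e) have a common boundary point: there are
pairwise equivalent geodesic rays from the respective basepoints passing within R of
e, γ₁ and e respectively. -/
theorem stmt8 (S : Set Γ) (hfin : S.Finite) (hsymm : ∀ s ∈ S, s⁻¹ ∈ S)
    (hgen : ∀ γ : Γ, ∃ l : List Γ, (∀ s ∈ l, s ∈ S) ∧ l.prod = γ)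
    (δ : ℝ) (hδ : 0 ≤ δ)
    (hhyp : ∀ a b c : Γ, min (gp S a c) (gp S c b) - δ ≤ gp S a b) :
    ∃ R₀ : ℝ, 1 < R₀ ∧ ∃ N₀ : ℕ, 0 < N₀ ∧
      ∀ γ₁ γ₂ : Γ, N₀ ≤ wordLength S γ₁ → N₀ ≤ wordLength S γ₂ →
        wordLength S (γ₁ * γ₂) = wordLength S γ₁ + wordLength S γ₂ →
        ∀ R : ℝ, R₀ ≤ R →
          ∃ ρ₁ ρ₂ ρ₃ : ℕ → Γ,
            IsGeodesicRay S ρ₁ ∧ ρ₁ 0 = γ₁ * γ₂ ∧ (∃ n, (wdist S (ρ₁ n) 1 : ℝ) ≤ R) ∧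
            IsGeodesicRay S ρ₂ ∧ ρ₂ 0 = γ₁ * γ₂ ∧ (∃ n, (wdist S (ρ₂ n) γ₁ : ℝ) ≤ R) ∧
            IsGeodesicRay S ρ₃ ∧ ρ₃ 0 = γ₁ ∧ (∃ n, (wdist S (ρ₃ n) 1 : ℝ) ≤ R) ∧
            RayEquiv S ρ₁ ρ₂ ∧ RayEquiv S ρ₂ ρ₃ := by
  classical
  by_cases hbd : ∃ B : ℕ, ∀ γ : Γ, wordLength S γ ≤ B
  · -- degenerate case: word lengths bounded; the statement is vacuous
    obtain ⟨B, hB⟩ := hbd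
    refine ⟨2, by norm_num, B + 1, by omega, ?_⟩
    intro γ₁ γ₂ h1 _ _ R _
    exact absurd (hB γ₁) (by omega)
  · push_neg at hbd
    refine ⟨5*δ + 3, by linarith, Nat.ceil (2*δ) + 1, by omega, ?_⟩
    intro γ₁ γ₂ hN1 hN2 hadd R hR
    set g := γ₁ * γ₂ with hg
    set N₁ := wordLength S γ₁ with hN₁
    set N₂ := wordLength S γ₂ with hN₂
    set N := wordLength S g with hN
    have hNsum : N = N₁ + N₂ := hadd
    have hδN₁ : 2*δ < (N₁ : ℝ) := by
      have h1 : (2*δ) ≤ (Nat.ceil (2*δ) : ℝ) := Nat.le_ceil _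
      have h2 : ((Nat.ceil (2*δ) + 1 : ℕ) : ℝ) ≤ (N₁ : ℝ) := by exact_mod_cast hN1
      push_cast at h2
      linarith
    have hwd1g : wdist S 1 g = N := by rw [wdist_one_left, hN]
    have hwdg1 : wdist S g 1 = N := by rw [wdist_comm S hsymm hgen, hwd1g]
    have hwd1γ₁ : wdist S 1 γ₁ = N₁ := by rw [wdist_one_left, hN₁]
    have hwdγ₁1 : wdist S γ₁ 1 = N₁ := by rw [wdist_comm S hsymm hgen, hwd1γ₁]
    have hdγ₁g : wdist S γ₁ g = N₂ := by
      rw [hg]; unfold wdist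
      rw [show γ₁⁻¹ * (γ₁ * γ₂) = γ₂ by group]
    have hdgγ₁ : wdist S g γ₁ = N₂ := by rw [wdist_comm S hsymm hgen, hdγ₁g]
    have hgpγ₁g : gp S γ₁ g = (N₁ : ℝ) := by
      unfold gp
      rw [hwd1γ₁, hwd1g, hdγ₁g, hNsum]
      push_cast
      ring
    -- target points
    have hz : ∀ n : ℕ, ∃ zz : Γ, wordLength S zz = n ∧ gp S g zz ≤ δ := by
      intro n
      obtain ⟨u, v, hu, hv, huv⟩ := opp_points S hsymm hgen hbd n
      have h0 : gp S u v = 0 := by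
        unfold gp
        rw [wdist_one_left, wdist_one_left, hu, hv, huv]
        push_cast
        ring
      have hmin := hhyp u v g
      rw [h0] at hmin
      rcases le_total (gp S u g) (gp S g v) with h | h
      · refine ⟨u, hu, ?_⟩
        rw [gp_comm S hsymm hgen]
        rw [min_eq_left h] at hmin
        linarith
      · refine ⟨v, hv, ?_⟩
        rw [min_eq_right h] at hmin
        linarith
    choose z hzlen hzgp using hz
    have hzγ₁ : ∀ n, gp S γ₁ (z n) ≤ 2*δ := by
      intro n
      have hmin := hhyp (z n) g γ₁
      have hzg : gp S (z n) g ≤ δ := by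
        rw [gp_comm S hsymm hgen]; exact hzgp n
      rw [hgpγ₁g] at hmin
      rcases le_total (gp S (z n) γ₁) (N₁ : ℝ) with h | h
      · rw [min_eq_left h] at hmin
        rw [gp_comm S hsymm hgen]
        linarith
      · rw [min_eq_right h] at hmin
        linarith
    -- distance from g and from γ₁ to z n
    have hdgz_lb : ∀ n, (N : ℝ) + n - 2*δ ≤ (wdist S g (z n) : ℝ) := by
      intro n
      have := hzgp n
      unfold gp at this
      rw [hwd1g, wdist_one_left, hzlen n] at this
      linarith
    have hdgz_ub : ∀ n, (wdist S g (z n) : ℕ) ≤ N + n := by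
      intro n
      have := wdist_triangle S hgen g 1 (z n)
      rw [hwdg1, wdist_one_left, hzlen n] at this
      omega
    have hdγz_ub : ∀ n, (wdist S γ₁ (z n) : ℕ) ≤ N₁ + n := by
      intro n
      have := wdist_triangle S hgen γ₁ 1 (z n)
      rw [hwdγ₁1, wdist_one_left, hzlen n] at this
      omega
    have hLσ : ∀ n : ℕ, n ≤ N + wdist S g (z n) := by
      intro n
      have := wdist_triangle S hgen 1 g (z n)
      rw [hwd1g, wdist_one_left, hzlen n] at this
      omega
    have hLτ : ∀ n : ℕ, n ≤ N₁ + wdist S γ₁ (z n) := by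
      intro n
      have := wdist_triangle S hgen 1 γ₁ (z n)
      rw [hwd1γ₁, wdist_one_left, hzlen n] at this
      omega
    -- geodesic segments and their ultrafilter limits
    choose σ hσ0 hσball hσend hσgeo using fun n => path_exists S hgen g (z n)
    choose τ hτ0 hτball hτend hτgeo using fun n => path_exists S hgen γ₁ (z n)
    obtain ⟨ρ, hρ⟩ := ultralimit S hfin hgen (Filter.hyperfilter ℕ) g σ hσball
    obtain ⟨ρ', hρ'⟩ := ultralimit S hfin hgen (Filter.hyperfilter ℕ) γ₁ τ hτball
    -- ρ is a geodesic ray starting at g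
    have hρgeo : ∀ i j, i ≤ j → wdist S (ρ i) (ρ j) = j - i := by
      intro i j hij
      have hmem : ({m | ∀ t ≤ j, σ m t = ρ t} ∩ {m | j + N ≤ m}) ∈ Filter.hyperfilter ℕ :=
        Filter.inter_mem (hρ j) (hyper_tail _)
      obtain ⟨m, hm1, hm2⟩ := Ultrafilter.nonempty_of_mem hmem
      simp only [Set.mem_setOf_eq] at hm1 hm2
      have hjL : j ≤ wdist S g (z m) := by
        have := hLσ m
        omega
      rw [← hm1 i hij, ← hm1 j (le_refl j)]
      exact hσgeo m i j hij hjL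
    have hρ0 : ρ 0 = g := by
      obtain ⟨m, hm⟩ := Ultrafilter.nonempty_of_mem (hρ 0)
      simp only [Set.mem_setOf_eq] at hm
      rw [← hm 0 (le_refl 0), hσ0 m]
    -- ρ' is a geodesic ray starting at γ₁
    have hρ'geo : ∀ i j, i ≤ j → wdist S (ρ' i) (ρ' j) = j - i := by
      intro i j hij
      have hmem : ({m | ∀ t ≤ j, τ m t = ρ' t} ∩ {m | j + N ≤ m}) ∈ Filter.hyperfilter ℕ :=
        Filter.inter_mem (hρ' j) (hyper_tail _)
      obtain ⟨m, hm1, hm2⟩ := Ultrafilter.nonempty_of_mem hmem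
      simp only [Set.mem_setOf_eq] at hm1 hm2
      have hjL : j ≤ wdist S γ₁ (z m) := by
        have := hLτ m
        have : N₁ ≤ N := by omega
        omega
      rw [← hm1 i hij, ← hm1 j (le_refl j)]
      exact hτgeo m i j hij hjL
    have hρ'0 : ρ' 0 = γ₁ := by
      obtain ⟨m, hm⟩ := Ultrafilter.nonempty_of_mem (hρ' 0)
      simp only [Set.mem_setOf_eq] at hm
      rw [← hm 0 (le_refl 0), hτ0 m]
    -- ρ passes near 1
    have hnear1 : ∃ n, (wdist S (ρ n) 1 : ℝ) ≤ R := by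
      obtain ⟨m, hm⟩ := Ultrafilter.nonempty_of_mem (hρ (N + Nat.ceil (3*δ) + 2))
      simp only [Set.mem_setOf_eq] at hm
      obtain ⟨k, hkL, hknear⟩ :=
        near_geo S hsymm hgen δ hhyp 1 g (z m) (σ m) (hσ0 m) (hσend m) (hσgeo m)
      have hgpz : gpAt S 1 g (z m) ≤ δ := by
        rw [← gp_eq_gpAt_one]; exact hzgp m
      have hnear : (wdist S 1 (σ m k) : ℝ) ≤ 3*δ + 2 := by linarith
      have hknat : wdist S 1 (σ m k) ≤ Nat.ceil (3*δ) + 2 := by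
        have hceil : (3*δ : ℝ) ≤ (Nat.ceil (3*δ) : ℝ) := Nat.le_ceil _
        have h1 : (wdist S 1 (σ m k) : ℝ) ≤ ((Nat.ceil (3*δ) + 2 : ℕ) : ℝ) := by
          push_cast
          linarith
        exact_mod_cast h1
      have hkval : wdist S g (σ m k) = k := by
        have := hσgeo m 0 k (Nat.zero_le k) hkL
        rw [hσ0 m] at this
        simpa using this
      have hkK : k ≤ N + Nat.ceil (3*δ) + 2 := by
        have htri := wdist_triangle S hgen g 1 (σ m k)
        rw [hwdg1, hkval] at htri
        omega
      refine ⟨k, ?_⟩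
      rw [wdist_comm S hsymm hgen, ← hm k hkK]
      have : (3*δ : ℝ) + 2 ≤ R := by linarith
      linarith
    -- ρ passes near γ₁
    have hnearγ₁ : ∃ n, (wdist S (ρ n) γ₁ : ℝ) ≤ R := by
      obtain ⟨m, hm⟩ := Ultrafilter.nonempty_of_mem (hρ (N + Nat.ceil (3*δ) + 2))
      simp only [Set.mem_setOf_eq] at hm
      obtain ⟨k, hkL, hknear⟩ :=
        near_geo S hsymm hgen δ hhyp γ₁ g (z m) (σ m) (hσ0 m) (hσend m) (hσgeo m)
      have hgpz : gpAt S γ₁ g (z m) ≤ δ := by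
        unfold gpAt
        rw [hdγ₁g]
        have h2 : (wdist S γ₁ (z m) : ℝ) ≤ (N₁ : ℝ) + m := by exact_mod_cast hdγz_ub m
        have h3 := hdgz_lb m
        have hcast : ((N₁ + N₂ : ℕ) : ℝ) = (N₁ : ℝ) + (N₂ : ℝ) := by push_cast; ring
        have hNr : (N : ℝ) = (N₁ : ℝ) + (N₂ : ℝ) := by
          rw [hNsum]; exact hcast
        linarith
      have hnear : (wdist S γ₁ (σ m k) : ℝ) ≤ 3*δ + 2 := by linarith
      have hknat : wdist S γ₁ (σ m k) ≤ Nat.ceil (3*δ) + 2 := by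
        have hceil : (3*δ : ℝ) ≤ (Nat.ceil (3*δ) : ℝ) := Nat.le_ceil _
        have h1 : (wdist S γ₁ (σ m k) : ℝ) ≤ ((Nat.ceil (3*δ) + 2 : ℕ) : ℝ) := by
          push_cast
          linarith
        exact_mod_cast h1
      have hkval : wdist S g (σ m k) = k := by
        have := hσgeo m 0 k (Nat.zero_le k) hkL
        rw [hσ0 m] at this
        simpa using this
      have hkK : k ≤ N + Nat.ceil (3*δ) + 2 := by
        have htri := wdist_triangle S hgen g γ₁ (σ m k)
        rw [hdgγ₁, hkval] at htri
        omega
      refine ⟨k, ?_⟩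
      rw [wdist_comm S hsymm hgen, ← hm k hkK]
      have : (3*δ : ℝ) + 2 ≤ R := by linarith
      linarith
    -- ρ' passes near 1
    have hnear1' : ∃ n, (wdist S (ρ' n) 1 : ℝ) ≤ R := by
      obtain ⟨m, hm⟩ := Ultrafilter.nonempty_of_mem (hρ' (N + Nat.ceil (4*δ) + 2))
      simp only [Set.mem_setOf_eq] at hm
      obtain ⟨k, hkL, hknear⟩ :=
        near_geo S hsymm hgen δ hhyp 1 γ₁ (z m) (τ m) (hτ0 m) (hτend m) (hτgeo m)
      have hgpz : gpAt S 1 γ₁ (z m) ≤ 2*δ := by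
        rw [← gp_eq_gpAt_one]; exact hzγ₁ m
      have hnear : (wdist S 1 (τ m k) : ℝ) ≤ 4*δ + 2 := by linarith
      have hknat : wdist S 1 (τ m k) ≤ Nat.ceil (4*δ) + 2 := by
        have hceil : (4*δ : ℝ) ≤ (Nat.ceil (4*δ) : ℝ) := Nat.le_ceil _
        have h1 : (wdist S 1 (τ m k) : ℝ) ≤ ((Nat.ceil (4*δ) + 2 : ℕ) : ℝ) := by
          push_cast
          linarith
        exact_mod_cast h1
      have hkval : wdist S γ₁ (τ m k) = k := by
        have := hτgeo m 0 k (Nat.zero_le k) hkL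
        rw [hτ0 m] at this
        simpa using this
      have hkK : k ≤ N + Nat.ceil (4*δ) + 2 := by
        have htri := wdist_triangle S hgen γ₁ 1 (τ m k)
        rw [hwdγ₁1, hkval] at htri
        omega
      refine ⟨k, ?_⟩
      rw [wdist_comm S hsymm hgen, ← hm k hkK]
      have : (4*δ : ℝ) + 2 ≤ R := by linarith
      linarith
    -- ρ and ρ' remain at bounded distance
    have hequiv : RayEquiv S ρ ρ' := by
      refine ⟨4*N + Nat.ceil (2*δ), fun n => ?_⟩
      have hmem : (({m | ∀ t ≤ n, σ m t = ρ t} ∩ {m | ∀ t ≤ n, τ m t = ρ' t})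
          ∩ {m | n + N ≤ m}) ∈ Filter.hyperfilter ℕ :=
        Filter.inter_mem (Filter.inter_mem (hρ n) (hρ' n)) (hyper_tail _)
      obtain ⟨m, ⟨hm1, hm2⟩, hm3⟩ := Ultrafilter.nonempty_of_mem hmem
      simp only [Set.mem_setOf_eq] at hm1 hm2 hm3
      have hnL : n ≤ wdist S g (z m) := by
        have := hLσ m
        omega
      have hnL' : n ≤ wdist S γ₁ (z m) := by
        have := hLτ m
        have : N₁ ≤ N := by omega
        omega
      set p := σ m n with hp
      set q := τ m n with hq
      have hdgp : wdist S g p = n := by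
        have := hσgeo m 0 n (Nat.zero_le n) hnL
        rw [hσ0 m] at this
        simpa [hp] using this
      have hdγq : wdist S γ₁ q = n := by
        have := hτgeo m 0 n (Nat.zero_le n) hnL'
        rw [hτ0 m] at this
        simpa [hq] using this
      have hdpz : wdist S p (z m) = wdist S g (z m) - n := by
        have := hσgeo m n (wdist S g (z m)) hnL (le_refl _)
        rw [hσend m _ (le_refl _)] at this
        simpa [hp] using this
      have hdqz : wdist S q (z m) = wdist S γ₁ (z m) - n := by
        have := hτgeo m n (wdist S γ₁ (z m)) hnL' (le_refl _)
        rw [hτend m _ (le_refl _)] at this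
        simpa [hq] using this
      -- real estimates
      have hwlp_lb : (n : ℝ) - N ≤ (wdist S 1 p : ℝ) := by
        have htri := wdist_triangle S hgen g 1 p
        rw [hwdg1, hdgp] at htri
        have : (n : ℝ) ≤ (N : ℝ) + (wdist S 1 p : ℝ) := by exact_mod_cast htri
        linarith
      have hwlp_ub : (wdist S 1 p : ℝ) ≤ (N : ℝ) + n := by
        have htri := wdist_triangle S hgen 1 g p
        rw [hwd1g, hdgp] at htri
        exact_mod_cast htri
      have hwlq_lb : (n : ℝ) - N₁ ≤ (wdist S 1 q : ℝ) := by
        have htri := wdist_triangle S hgen γ₁ 1 q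
        rw [hwdγ₁1, hdγq] at htri
        have : (n : ℝ) ≤ (N₁ : ℝ) + (wdist S 1 q : ℝ) := by exact_mod_cast htri
        linarith
      have hwlq_ub : (wdist S 1 q : ℝ) ≤ (N₁ : ℝ) + n := by
        have htri := wdist_triangle S hgen 1 γ₁ q
        rw [hwd1γ₁, hdγq] at htri
        exact_mod_cast htri
      have hN₁N : (N₁ : ℝ) ≤ (N : ℝ) := by
        have : N₁ ≤ N := by omega
        exact_mod_cast this
      have hdpzr : (wdist S p (z m) : ℝ) = (wdist S g (z m) : ℝ) - n := by
        rw [hdpz]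
        push_cast [Nat.cast_sub hnL]
        ring
      have hdqzr : (wdist S q (z m) : ℝ) = (wdist S γ₁ (z m) : ℝ) - n := by
        rw [hdqz]
        push_cast [Nat.cast_sub hnL']
        ring
      have hLub : (wdist S g (z m) : ℝ) ≤ (N : ℝ) + m := by exact_mod_cast hdgz_ub m
      have hL'ub : (wdist S γ₁ (z m) : ℝ) ≤ (N₁ : ℝ) + m := by exact_mod_cast hdγz_ub m
      have hgppz : (n : ℝ) - N ≤ gp S p (z m) := by
        unfold gp
        rw [wdist_one_left (S := S) (z m), hzlen m]
        rw [show wdist S 1 p = wdist S 1 p from rfl]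
        rw [hdpzr]
        linarith
      have hgpzq : (n : ℝ) - N ≤ gp S (z m) q := by
        rw [gp_comm S hsymm hgen]
        unfold gp
        rw [wdist_one_left (S := S) (z m), hzlen m, hdqzr]
        linarith
      have hmin := hhyp p q (z m)
      have hgppq : (n : ℝ) - N - δ ≤ gp S p q := by
        rcases le_total (gp S p (z m)) (gp S (z m) q) with h | h
        · rw [min_eq_left h] at hmin
          linarith
        · rw [min_eq_right h] at hmin
          linarith
      have hwpq : (wdist S p q : ℝ) = (wdist S 1 p : ℝ) + (wdist S 1 q : ℝ) - 2 * gp S p q := by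
        unfold gp
        ring
      have hfinal : (wdist S p q : ℝ) ≤ 4*(N : ℝ) + 2*δ := by
        rw [hwpq]
        linarith
      have hres : (wdist S p q : ℝ) ≤ ((4*N + Nat.ceil (2*δ) : ℕ) : ℝ) := by
        have hceil : (2*δ : ℝ) ≤ (Nat.ceil (2*δ) : ℝ) := Nat.le_ceil _
        push_cast
        linarith
      have : wdist S p q ≤ 4*N + Nat.ceil (2*δ) := by exact_mod_cast hres
      rw [← hm1 n (le_refl n), ← hm2 n (le_refl n)]
      exact this
    -- assemble
    refine ⟨ρ, ρ, ρ', ray_of_ordered S hsymm hgen ρ hρgeo, hρ0, hnear1,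
      ray_of_ordered S hsymm hgen ρ hρgeo, hρ0, hnearγ₁,
      ray_of_ordered S hsymm hgen ρ' hρ'geo, hρ'0, hnear1',
      ⟨0, fun n => by rw [wdist_self]⟩, hequiv⟩
end
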